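/- Let g : A ⥤ C be a Grothendieck opfibration, f : A ⥤ B, h : C ⥤ B functors, and φ : f ⟶ g ⋙ h a natural transformation exhibiting h as a pointwise left Kan extension of f along g. Then for every category X and every functor c : X ⥤ C, writing P for the strict pullback of g along c (objects: pairs (x, a) with c.obj x = g.obj a; morphisms: pairs (u, v) with c.map u = g.map v modulo object equalities) with projections p : P ⥤ A and q : P ⥤ X, the whiskering of φ with p, as a natural transformation p ⋙ f ⟶ q ⋙ c ⋙ h, exhibits c ⋙ h as a pointwise left Kan extension of p ⋙ f along q. -/

import Mathlib

open CategoryTheory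

universe w v v₁ v₂ v₃ v₄ v₅ u u₁ u₂ u₃ u₄ u₅

/-- A morphism `α : e₁ ⟶ e₂` is `p`-cartesian when every `α₁ : e₃ ⟶ e₂` together with a
factorisation `p.map α₁ = β ≫ p.map α` lifts uniquely through `α`. -/
def IsCartesianHom {E : Type u₁} {B : Type u₂} [Category.{v₁} E] [Category.{v₂} B]
    (p : E ⥤ B) {e₁ e₂ : E} (α : e₁ ⟶ e₂) : Prop :=
  ∀ (e₃ : E) (α₁ : e₃ ⟶ e₂) (β : p.obj e₃ ⟶ p.obj e₁),
    p.map α₁ = β ≫ p.map α → ∃! γ : e₃ ⟶ e₁, p.map γ = β ∧ γ ≫ α = α₁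

/-- A functor `p : E ⥤ B` is a Grothendieck fibration when every morphism
`β : b ⟶ p.obj e` admits a `p`-cartesian lift with codomain `e`. -/
def IsGrothendieckFibration {E : Type u₁} {B : Type u₂} [Category.{v₁} E] [Category.{v₂} B]
    (p : E ⥤ B) : Prop :=
  ∀ (e : E) (b : B) (β : b ⟶ p.obj e),
    ∃ (e' : E) (α : e' ⟶ e) (h : b = p.obj e'),
      IsCartesianHom p α ∧ eqToHom h ≫ p.map α = β

/-- A functor is a Grothendieck opfibration when its opposite is a Grothendieck fibration. -/
def IsGrothendieckOpfibration {E : Type u₁} {B : Type u₂} [Category.{v₁} E] [Category.{v₂} B]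
    (p : E ⥤ B) : Prop :=
  IsGrothendieckFibration p.op

section StrictPullback

variable {X : Type u₁} {A : Type u₂} {B : Type u₃}
variable [Category.{v₁} X] [Category.{v₂} A] [Category.{v₃} B]

/-- The strict pullback of `g : X ⥤ B` and `f : A ⥤ B`: objects are pairs with equal images. -/
structure StrictPullback (g : X ⥤ B) (f : A ⥤ B) : Type max u₁ u₂ where
  fst : X
  snd : A
  eq : g.obj fst = f.obj snd

namespace StrictPullback

variable {g : X ⥤ B} {f : A ⥤ B}

/-- Morphisms in the strict pullback: pairs of morphisms with equal images,
modulo the object equalities. -/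
@[ext]
structure Hom (P Q : StrictPullback g f) where
  left : P.fst ⟶ Q.fst
  right : P.snd ⟶ Q.snd
  w : g.map left ≫ eqToHom Q.eq = eqToHom P.eq ≫ f.map right

instance : Category (StrictPullback g f) where
  Hom P Q := Hom P Q
  id P := { left := 𝟙 _, right := 𝟙 _, w := by simp }
  comp u v :=
    { left := u.left ≫ v.left
      right := u.right ≫ v.right
      w := by
        rw [Functor.map_comp, Functor.map_comp, Category.assoc, v.w, ← Category.assoc, u.w,
          Category.assoc] }

end StrictPullback

/-- The projection from a strict pullback to the domain of `g`. -/
def strictPullbackFst (g : X ⥤ B) (f : A ⥤ B) : StrictPullback g f ⥤ X where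
  obj P := P.fst
  map u := u.left

/-- The projection from a strict pullback to the domain of `f`. -/
def strictPullbackSnd (g : X ⥤ B) (f : A ⥤ B) : StrictPullback g f ⥤ A where
  obj P := P.snd
  map u := u.right

end StrictPullback

section Statement11

variable {A : Type u₁} {C : Type u₂} {B : Type u₃}
variable [Category.{v₁} A] [Category.{v₂} C] [Category.{v₃} B]

/-- The canonical natural transformation `p ⋙ g ⟶ q ⋙ c` on the strict pullback of
`g : A ⥤ C` along `c : X ⥤ C` (it is a natural isomorphism of `eqToHom`s). -/
def strictPullbackComparison {X : Type u₄} [Category.{v₄} X] (c : X ⥤ C) (g : A ⥤ C) :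
    strictPullbackSnd c g ⋙ g ⟶ strictPullbackFst c g ⋙ c where
  app P := eqToHom P.eq.symm
  naturality P Q u := by
    have h := u.w
    rw [comp_eqToHom_iff] at h
    dsimp [strictPullbackFst, strictPullbackSnd]
    rw [h]
    simp

/-- The whiskering of `φ : f ⟶ g ⋙ h` with the projection `p` from the strict pullback of
`g` along `c`, viewed as a natural transformation `p ⋙ f ⟶ q ⋙ (c ⋙ h)`. -/
def strictPullbackWhisker {X : Type u₄} [Category.{v₄} X] (c : X ⥤ C)
    (g : A ⥤ C) (f : A ⥤ B) (h : C ⥤ B) (φ : f ⟶ g ⋙ h) :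
    strictPullbackSnd c g ⋙ f ⟶ strictPullbackFst c g ⋙ (c ⋙ h) :=
  Functor.whiskerLeft (strictPullbackSnd c g) φ ≫ Functor.whiskerRight (strictPullbackComparison c g) h

/-- Unpacked form of a Grothendieck opfibration: opcartesian lifts in the original
category. -/
lemma opfibLift {g : A ⥤ C} (hg : IsGrothendieckOpfibration g) {a : A} {c₀ : C}
    (t : g.obj a ⟶ c₀) :
    ∃ (b : A) (β : a ⟶ b) (hb : g.obj b = c₀),
      g.map β ≫ eqToHom hb = t ∧
      ∀ (z : A) (m : a ⟶ z) (β' : g.obj b ⟶ g.obj z),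
        g.map m = g.map β ≫ β' → ∃! γ : b ⟶ z, g.map γ = β' ∧ β ≫ γ = m := by
  obtain ⟨e', α, h', hcart, hfac⟩ := hg (Opposite.op a) (Opposite.op c₀) t.op
  have hb : g.obj e'.unop = c₀ := (congrArg Opposite.unop h').symm
  refine ⟨e'.unop, α.unop, hb, ?_, ?_⟩
  · have := congrArg Quiver.Hom.unop hfac
    simp only [unop_comp, Quiver.Hom.unop_op] at this
    rw [← this]
    congr 1
    simp [eqToHom_unop]
  · intro z m β' hm
    obtain ⟨γo, ⟨hγ1, hγ2⟩, huniq⟩ := hcart (Opposite.op z) m.op β'.op (by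
      have : (g.map m).op = (g.map α.unop ≫ β').op := congrArg Quiver.Hom.op hm
      simpa using this)
    refine ⟨γo.unop, ⟨Quiver.Hom.op_inj (by simpa using hγ1), ?_⟩, ?_⟩
    · have := congrArg Quiver.Hom.unop hγ2
      simpa using this
    · intro γ ⟨h1, h2⟩
      have := huniq γ.op ⟨by simpa using congrArg Quiver.Hom.op h1,
        by simpa using congrArg Quiver.Hom.op h2⟩
      exact Quiver.Hom.op_inj this

variable {X : Type u₄} [Category.{v₄} X]

/-- The comparison functor from the comma category of the strict pullback projection to
the comma category of `g`. -/
@[simps]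
def toCostructured (c : X ⥤ C) (g : A ⥤ C) (x : X) :
    CostructuredArrow (strictPullbackFst c g) x ⥤ CostructuredArrow g (c.obj x) where
  obj e := CostructuredArrow.mk (eqToHom e.left.eq.symm ≫ c.map e.hom)
  map {e e'} κ := CostructuredArrow.homMk κ.left.right (by
    have hq : κ.left.left ≫ e'.hom = e.hom := CostructuredArrow.w κ
    have hw : g.map κ.left.right
        = eqToHom e.left.eq.symm ≫ c.map κ.left.left ≫ eqToHom e'.left.eq := by
      rw [← cancel_epi (eqToHom e.left.eq), ← κ.left.w]; simp
    dsimp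
    rw [hw, ← hq]
    simp
    exact congrArg (fun t => eqToHom _ ≫ t) (c.map_comp _ _).symm)
  map_id e := by
    apply CostructuredArrow.hom_ext
    simp [strictPullbackFst]
    rfl
  map_comp κ₁ κ₂ := by
    apply CostructuredArrow.hom_ext
    simp [strictPullbackFst]
    rfl

lemma toCostructured_final (c : X ⥤ C) (g : A ⥤ C) (x : X)
    (hg : IsGrothendieckOpfibration g) : (toCostructured c g x).Final := by
  constructor
  intro d
  obtain ⟨b, β, hb, hβ, hcart⟩ := opfibLift hg d.hom
  let Q₀ : StrictPullback c g := ⟨x, b, hb.symm⟩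
  let e₀ : CostructuredArrow (strictPullbackFst c g) x :=
    CostructuredArrow.mk (show (strictPullbackFst c g).obj Q₀ ⟶ x from 𝟙 x)
  let E₀ : StructuredArrow d (toCostructured c g x) :=
    StructuredArrow.mk (Y := e₀) (CostructuredArrow.homMk β (by
      dsimp [e₀, Q₀, toCostructured, strictPullbackFst]
      simpa using hβ))
  have key : ∀ E : StructuredArrow d (toCostructured c g x), Zigzag E E₀ := by
    intro E
    set e := E.right with he
    set mhom : d.left ⟶ e.left.snd := E.hom.left with hmhom
    have hm : g.map mhom ≫ (eqToHom e.left.eq.symm ≫ c.map e.hom) = d.hom := by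
      simpa [toCostructured] using CostructuredArrow.w E.hom
    obtain ⟨b', β', hb', hβ', hcart'⟩ :=
      opfibLift hg (eqToHom e.left.eq.symm ≫ c.map e.hom)
    have hb'' : g.obj b' = c.obj x := hb'
    let Q' : StrictPullback c g := ⟨x, b', hb''.symm⟩
    let eh : CostructuredArrow (strictPullbackFst c g) x :=
      CostructuredArrow.mk (show (strictPullbackFst c g).obj Q' ⟶ x from 𝟙 x)
    have hβ'2 : g.map β' ≫ eqToHom hb'' = eqToHom e.left.eq.symm ≫ c.map e.hom := hβ'
    have hwEH : g.map (mhom ≫ β') ≫ (eqToHom Q'.eq.symm ≫ c.map (𝟙 x)) = d.hom := by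
      have hstep : g.map β' ≫ (eqToHom Q'.eq.symm ≫ c.map (𝟙 x))
          = eqToHom e.left.eq.symm ≫ c.map e.hom := by
        rw [← hβ'2]; simp [Q']
      rw [Functor.map_comp, Category.assoc, hstep]
      exact hm
    let EH : StructuredArrow d (toCostructured c g x) :=
      StructuredArrow.mk (Y := eh) (CostructuredArrow.homMk (mhom ≫ β') (by
        dsimp [eh, Q', toCostructured]
        exact hwEH))
    -- morphism (e, hom) ⟶ EH
    have pw1 : c.map e.hom ≫ eqToHom Q'.eq = eqToHom e.left.eq ≫ g.map β' := by
      have h2 : g.map β' = eqToHom e.left.eq.symm ≫ c.map e.hom ≫ eqToHom Q'.eq := by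
        rw [← Category.assoc, ← hβ'2]; simp
      rw [h2]; simp; rfl
    let κ₁ : e ⟶ eh := CostructuredArrow.homMk
      (show e.left ⟶ eh.left from ⟨e.hom, β', pw1⟩)
      (by simp [eh, strictPullbackFst]; exact Category.comp_id _)
    have mor₁ : E ⟶ EH := by
      refine StructuredArrow.homMk κ₁ ?_
      apply CostructuredArrow.hom_ext
      simp [EH, κ₁, toCostructured]
      rfl
    -- morphism E₀ ⟶ EH
    obtain ⟨γ, ⟨hγ1, hγ2⟩, -⟩ := hcart b' (mhom ≫ β') (eqToHom (hb.trans hb''.symm))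
      (by
        rw [Functor.map_comp,
          show g.map β' = (eqToHom e.left.eq.symm ≫ c.map e.hom) ≫ eqToHom hb''.symm from by
            rw [← hβ'2]; simp,
          ← Category.assoc, hm, ← hβ]
        simp)
    have pw2 : c.map (𝟙 x) ≫ eqToHom Q'.eq = eqToHom Q₀.eq ≫ g.map γ := by
      rw [hγ1]
      simp [Q₀, Q']
    let κ₂ : e₀ ⟶ eh := CostructuredArrow.homMk
      (show e₀.left ⟶ eh.left from ⟨𝟙 x, γ, pw2⟩)
      (by simp [eh, e₀, strictPullbackFst]; exact Category.comp_id _)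
    have mor₂ : E₀ ⟶ EH := by
      refine StructuredArrow.homMk κ₂ ?_
      apply CostructuredArrow.hom_ext
      simp [EH, E₀, κ₂, toCostructured]
      exact hγ2
    have z1 : Zag E EH := Or.inl ⟨mor₁⟩
    have z2 : Zag EH E₀ := Or.inr ⟨mor₂⟩
    exact Relation.ReflTransGen.trans (Relation.ReflTransGen.single z1)
      (Relation.ReflTransGen.single z2)
  have : Nonempty (StructuredArrow d (toCostructured c g x)) := ⟨E₀⟩
  exact zigzag_isConnected fun j₁ j₂ => (key j₁).trans (zigzag_symmetric.symm _ _ (key j₂))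


/-- Let `g : A ⥤ C` be a Grothendieck opfibration and let
`φ : f ⟶ g ⋙ h` exhibit `h` as a pointwise left Kan extension of `f` along `g`.  Then for
every category `X` and functor `c : X ⥤ C`, the whiskering of `φ` with the projection `p`
of the strict pullback of `g` along `c` exhibits `c ⋙ h` as a pointwise left Kan extension
of `p ⋙ f` along the projection `q` to `X`. -/
theorem stmt11 (g : A ⥤ C) (f : A ⥤ B) (h : C ⥤ B)
    (hg : IsGrothendieckOpfibration g) (φ : f ⟶ g ⋙ h)
    (hφ : (Functor.LeftExtension.mk h φ).IsPointwiseLeftKanExtension)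
    (X : Type u₄) [Category.{v₄} X] (c : X ⥤ C) :
    Nonempty (Functor.LeftExtension.mk (c ⋙ h)
      (strictPullbackWhisker c g f h φ)).IsPointwiseLeftKanExtension := by
  constructor
  intro x
  haveI : (toCostructured c g x).Final := toCostructured_final c g x hg
  have w := (Functor.Final.isColimitWhiskerEquiv (toCostructured c g x)
    ((Functor.LeftExtension.mk h φ).coconeAt (c.obj x))).symm (hφ (c.obj x))
  refine Limits.IsColimit.ofIsoColimit w (Limits.Cocones.ext (Iso.refl _) ?_)
  intro e
  simp [toCostructured, strictPullbackWhisker, strictPullbackComparison,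
    strictPullbackSnd, strictPullbackFst, Limits.Cocone.whisker, Functor.LeftExtension.coconeAt]
  erw [Category.comp_id, Category.assoc]
  exact congrArg (fun t => φ.app e.left.snd ≫ t) (h.map_comp (eqToHom e.left.eq.symm) (c.map e.hom))

end Statement11
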